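/- If A is a polynomial in the coefficients a_0, …, a_n that is homogeneous of degree g and isobaric of weight p, then D(D(Δ A)) − Δ(D(D A)) = (2·((n·g : ℚ) − 2·p + 1)) • (D A). -/

import Mathlib

open MvPolynomial

/-- The weight function assigning weight `i` to the coefficient variable `aᵢ`. -/
def wt (n : ℕ) : Fin (n + 1) → ℕ := fun i => (i : ℕ)

/-- The lowering operator `D A = Σ_{i=0}^{n-1} (i+1) · aᵢ · ∂A/∂a_{i+1}`. -/
noncomputable def Dop (n : ℕ) (A : MvPolynomial (Fin (n + 1)) ℚ) :
    MvPolynomial (Fin (n + 1)) ℚ :=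
  ∑ i : Fin n, C ((i : ℕ) + 1 : ℚ) * X i.castSucc * pderiv i.succ A

/-- The raising operator `Δ A = Σ_{i=0}^{n-1} (n-i) · a_{i+1} · ∂A/∂aᵢ`. -/
noncomputable def Δop (n : ℕ) (A : MvPolynomial (Fin (n + 1)) ℚ) :
    MvPolynomial (Fin (n + 1)) ℚ :=
  ∑ i : Fin n, C ((n - (i : ℕ) : ℕ) : ℚ) * X i.succ * pderiv i.castSucc A

section Infra

variable {σ : Type*} [DecidableEq σ]

lemma X_mul_pderiv_monomial (i : σ) (d : σ →₀ ℕ) (c : ℚ) :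
    X i * pderiv i (monomial d c) = monomial d (c * d i) := by
  rw [pderiv_monomial]
  by_cases h : d i = 0
  · simp [h]
  · have hd' : Finsupp.single i 1 + (d - Finsupp.single i 1) = d := by
      ext a
      by_cases ha : a = i
      · subst ha
        simp only [Finsupp.add_apply, Finsupp.tsub_apply, Finsupp.single_eq_same]
        omega
      · simp [Finsupp.single_apply, Ne.symm ha, ha]
    rw [X, monomial_mul, one_mul, hd']

lemma euler_gen [Fintype σ] (c : σ → ℚ) (m : ℚ) (A : MvPolynomial σ ℚ)
    (h : ∀ d ∈ A.support, ∑ i, c i * (d i : ℚ) = m) :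
    ∑ i, C (c i) * (X i * pderiv i A) = C m * A := by
  conv_lhs => rw [A.as_sum]
  conv_rhs => rw [A.as_sum]
  rw [Finset.mul_sum]
  simp only [map_sum, Finset.mul_sum, _root_.X_mul_pderiv_monomial, C_mul_monomial]
  rw [Finset.sum_comm]
  refine Finset.sum_congr rfl fun d hd => ?_
  rw [← map_sum, ← h d hd, Finset.sum_mul]
  congr 1
  exact Finset.sum_congr rfl fun i _ => by ring

lemma pderiv_pderiv_comm (i j : σ) (A : MvPolynomial σ ℚ) :
    pderiv i (pderiv j A) = pderiv j (pderiv i A) := by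
  by_cases hij : i = j
  · subst hij; rfl
  · induction A using MvPolynomial.induction_on' with
    | monomial d c =>
      simp only [pderiv_monomial]
      rw [tsub_right_comm]
      congr 1
      rw [Finsupp.tsub_apply, Finsupp.tsub_apply, Finsupp.single_apply, Finsupp.single_apply]
      simp [hij, Ne.symm hij]
      ring
    | add p q hp hq => simp [hp, hq]

lemma wh_cast (w : σ → ℕ) (m : ℕ) (A : MvPolynomial σ ℚ)
    (h : A.IsWeightedHomogeneous w m) :
    A.IsWeightedHomogeneous (fun i => (w i : ℤ)) (m : ℤ) := by
  intro d hd
  have h2 := h hd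
  rw [Finsupp.weight_apply, Finsupp.sum] at h2 ⊢
  simp only [smul_eq_mul, nsmul_eq_mul] at h2 ⊢
  exact_mod_cast congrArg (Nat.cast (R := ℤ)) h2

lemma wh_pderiv (w : σ → ℤ) (m : ℤ) (j : σ) (A : MvPolynomial σ ℚ)
    (h : A.IsWeightedHomogeneous w m) :
    (pderiv j A).IsWeightedHomogeneous w (m - w j) := by
  rw [← mem_weightedHomogeneousSubmodule]
  nth_rewrite 1 [A.as_sum]
  rw [map_sum]
  apply Submodule.sum_mem
  intro d hd
  rw [pderiv_monomial, mem_weightedHomogeneousSubmodule]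
  by_cases hj : d j = 0
  · simp only [hj, Nat.cast_zero, mul_zero, map_zero]
    exact isWeightedHomogeneous_zero ℚ w _
  · apply isWeightedHomogeneous_monomial
    have hw : Finsupp.weight w d = m := h (MvPolynomial.mem_support_iff.mp hd)
    have hd' : Finsupp.single j 1 + (d - Finsupp.single j 1) = d := by
      ext a
      by_cases ha : a = j
      · subst ha
        simp only [Finsupp.add_apply, Finsupp.tsub_apply, Finsupp.single_eq_same]
        omega
      · simp [Finsupp.single_apply, Ne.symm ha, ha]
    have h3 := congrArg (Finsupp.weight w) hd'
    rw [map_add, hw] at h3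
    have hs : Finsupp.weight w (Finsupp.single j (1 : ℕ)) = w j := by
      rw [Finsupp.weight_apply, Finsupp.sum_single_index] <;> simp
    rw [hs] at h3
    omega

lemma wh_term (w : σ → ℤ) (m : ℤ) (k j : σ) (c : ℚ) (A : MvPolynomial σ ℚ)
    (h : A.IsWeightedHomogeneous w m) :
    (C c * X k * pderiv j A).IsWeightedHomogeneous w (w k + (m - w j)) := by
  have h1 := (isWeightedHomogeneous_X ℚ w k).mul (wh_pderiv w m j A h)
  have h2 := (isWeightedHomogeneous_C w c).mul h1
  rw [zero_add] at h2
  rw [mul_assoc]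
  exact h2

lemma pderiv_CXmul (a : ℚ) (s k : σ) (B : MvPolynomial σ ℚ) :
    pderiv k (C a * X s * B) =
      C a * ((if s = k then (1 : MvPolynomial σ ℚ) else 0) * B + X s * pderiv k B) := by
  rw [mul_assoc, pderiv_C_mul, pderiv_mul]
  congr 2
  simp [pderiv_X, Pi.single_apply]

lemma sum_univ_eq_weight [Fintype σ] (w : σ → ℤ) (d : σ →₀ ℕ) :
    ∑ i, (d i : ℤ) * w i = Finsupp.weight w d := by
  rw [Finsupp.weight_apply, Finsupp.sum]
  rw [← Finset.sum_subset (Finset.subset_univ d.support)]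
  · exact Finset.sum_congr rfl fun i _ => by rw [nsmul_eq_mul]
  · intro i _ hi
    simp [Finsupp.notMem_support_iff.mp hi]

end Infra

lemma Dop_add (n : ℕ) (A B : MvPolynomial (Fin (n + 1)) ℚ) :
    Dop n (A + B) = Dop n A + Dop n B := by
  simp [Dop, map_add, mul_add, Finset.sum_add_distrib]

lemma Dop_smul (n : ℕ) (c : ℚ) (A : MvPolynomial (Fin (n + 1)) ℚ) :
    Dop n (c • A) = c • Dop n A := by
  simp [Dop, map_smul, Finset.smul_sum, mul_smul_comm]

lemma Dop_wh (n : ℕ) (w : Fin (n + 1) → ℤ) (m c : ℤ) (A : MvPolynomial (Fin (n + 1)) ℚ)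
    (hc : ∀ i : Fin n, w i.castSucc + (m - w i.succ) = c)
    (h : A.IsWeightedHomogeneous w m) :
    (Dop n A).IsWeightedHomogeneous w c := by
  rw [← mem_weightedHomogeneousSubmodule, Dop]
  refine Submodule.sum_mem _ fun i _ => ?_
  rw [mem_weightedHomogeneousSubmodule, ← hc i]
  exact wh_term w m i.castSucc i.succ _ A h

lemma comm_key (n : ℕ) (A : MvPolynomial (Fin (n + 1)) ℚ) (g p : ℤ)
    (hg : A.IsWeightedHomogeneous (fun _ => (1 : ℤ)) g)
    (hp : A.IsWeightedHomogeneous (fun i : Fin (n + 1) => ((i : ℕ) : ℤ)) p) :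
    Dop n (Δop n A) - Δop n (Dop n A) = (((n * g - 2 * p : ℤ)) : ℚ) • A := by
  have e1 : Dop n (Δop n A) =
      (∑ i : Fin n, (C ((i:ℕ)+1:ℚ) * C ((n-(i:ℕ):ℕ):ℚ)) * (X i.castSucc * pderiv i.castSucc A))
      + ∑ i : Fin n, ∑ j : Fin n, (C ((i:ℕ)+1:ℚ) * C ((n-(j:ℕ):ℕ):ℚ)) *
          (X i.castSucc * (X j.succ * pderiv i.succ (pderiv j.castSucc A))) := by
    simp only [Dop, Δop, map_sum, pderiv_CXmul, Fin.succ_inj, mul_add, Finset.mul_sum, mul_ite,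
      ite_mul, mul_zero, zero_mul, one_mul, Finset.sum_add_distrib, Finset.sum_ite_eq,
      Finset.sum_ite_eq', Finset.mem_univ, if_true]
    congr 1
    · exact Finset.sum_congr rfl fun i _ => by ring
    · exact Finset.sum_congr rfl fun i _ => Finset.sum_congr rfl fun j _ => by ring
  have e2 : Δop n (Dop n A) =
      (∑ i : Fin n, (C ((i:ℕ)+1:ℚ) * C ((n-(i:ℕ):ℕ):ℚ)) * (X i.succ * pderiv i.succ A))
      + ∑ i : Fin n, ∑ j : Fin n, (C ((i:ℕ)+1:ℚ) * C ((n-(j:ℕ):ℕ):ℚ)) *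
          (X i.castSucc * (X j.succ * pderiv i.succ (pderiv j.castSucc A))) := by
    simp only [Dop, Δop, map_sum, pderiv_CXmul, Fin.castSucc_inj, mul_add, Finset.mul_sum, mul_ite,
      ite_mul, mul_zero, zero_mul, one_mul, Finset.sum_add_distrib, Finset.sum_ite_eq,
      Finset.sum_ite_eq', Finset.mem_univ, if_true]
    refine congrArg₂ (· + ·) ?_ ?_
    · exact Finset.sum_congr rfl fun i _ => by ring
    · rw [Finset.sum_comm]
      exact Finset.sum_congr rfl fun j _ => Finset.sum_congr rfl fun i _ => by
        rw [pderiv_pderiv_comm]; ring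
  have key : Dop n (Δop n A) - Δop n (Dop n A) =
      ∑ k : Fin (n + 1), C ((n : ℚ) - 2 * ((k : ℕ) : ℚ)) * (X k * pderiv k A) := by
    rw [e1, e2, add_sub_add_right_eq_sub]
    have hc : ∀ i : Fin n, ((n - (i:ℕ) : ℕ) : ℚ) = (n : ℚ) - ((i:ℕ) : ℚ) := fun i =>
      Nat.cast_sub i.is_lt.le
    calc (∑ i : Fin n, C ((i:ℕ)+1:ℚ) * C ((n-(i:ℕ):ℕ):ℚ) * (X i.castSucc * pderiv i.castSucc A))
          - ∑ i : Fin n, C ((i:ℕ)+1:ℚ) * C ((n-(i:ℕ):ℕ):ℚ) * (X i.succ * pderiv i.succ A)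
        = (∑ k : Fin (n+1), C ((((k:ℕ):ℚ) + 1) * ((n:ℚ) - ((k:ℕ):ℚ))) * (X k * pderiv k A))
          - ∑ k : Fin (n+1), C (((k:ℕ):ℚ) * ((n:ℚ) - ((k:ℕ):ℚ) + 1)) * (X k * pderiv k A) := by
          rw [Fin.sum_univ_castSucc (f := fun k : Fin (n+1) =>
              C ((((k:ℕ):ℚ) + 1) * ((n:ℚ) - ((k:ℕ):ℚ))) * (X k * pderiv k A)),
            Fin.sum_univ_succ (f := fun k : Fin (n+1) =>
              C (((k:ℕ):ℚ) * ((n:ℚ) - ((k:ℕ):ℚ) + 1)) * (X k * pderiv k A))]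
          simp only [Fin.val_last, Fin.coe_castSucc, Fin.val_succ, Fin.val_zero, Nat.cast_zero,
            zero_mul, map_zero, sub_self, mul_zero, add_zero, zero_add]
          refine congrArg₂ (· - ·) ?_ ?_
          · refine Finset.sum_congr rfl fun i _ => ?_
            rw [← C_mul, hc i]
          · refine Finset.sum_congr rfl fun i _ => ?_
            rw [← C_mul, hc i]
            congr 2
            push_cast
            ring
      _ = ∑ k : Fin (n+1), (C ((((k:ℕ):ℚ) + 1) * ((n:ℚ) - ((k:ℕ):ℚ))) * (X k * pderiv k A)
            - C (((k:ℕ):ℚ) * ((n:ℚ) - ((k:ℕ):ℚ) + 1)) * (X k * pderiv k A)) :=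
          (Finset.sum_sub_distrib _ _).symm
      _ = ∑ k : Fin (n + 1), C ((n : ℚ) - 2 * ((k : ℕ) : ℚ)) * (X k * pderiv k A) := by
          refine Finset.sum_congr rfl fun k _ => ?_
          rw [← sub_mul, ← map_sub]
          refine congrArg₂ (· * ·) (congrArg C ?_) rfl
          ring
  rw [key]
  have hA : ∀ d ∈ A.support, ∑ k : Fin (n+1), ((n : ℚ) - 2 * ((k:ℕ):ℚ)) * ((d k : ℕ) : ℚ)
      = ((n * g - 2 * p : ℤ) : ℚ) := by
    intro d hd
    have h1 : ∑ k : Fin (n+1), ((d k : ℤ) * 1) = g :=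
      (sum_univ_eq_weight _ d).trans (hg (MvPolynomial.mem_support_iff.mp hd))
    have h2 : ∑ k : Fin (n+1), ((d k : ℤ) * ((k:ℕ) : ℤ)) = p :=
      (sum_univ_eq_weight _ d).trans (hp (MvPolynomial.mem_support_iff.mp hd))
    have h1' : ∑ k : Fin (n+1), ((d k : ℕ) : ℚ) = (g : ℚ) := by
      have := congrArg (fun x : ℤ => (x : ℚ)) h1
      push_cast at this
      simpa using this
    have h2' : ∑ k : Fin (n+1), (((d k : ℕ) : ℚ) * ((k : ℕ) : ℚ)) = (p : ℚ) := by
      have := congrArg (fun x : ℤ => (x : ℚ)) h2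
      push_cast at this
      simpa using this
    have hexpand : ∑ k : Fin (n+1), ((n : ℚ) - 2 * ((k:ℕ):ℚ)) * ((d k : ℕ) : ℚ)
        = (n : ℚ) * (∑ k : Fin (n+1), ((d k : ℕ) : ℚ))
          - 2 * ∑ k : Fin (n+1), (((d k : ℕ) : ℚ) * ((k : ℕ) : ℚ)) := by
      rw [Finset.mul_sum, Finset.mul_sum, ← Finset.sum_sub_distrib]
      exact Finset.sum_congr rfl fun k _ => by ring
    rw [hexpand, h1', h2']
    push_cast
    ring
  rw [euler_gen _ _ A hA, smul_eq_C_mul]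

/-- If `A` is homogeneous of degree `g` and isobaric of weight `p`, then
`D²Δ A − ΔD² A = 2·(n·g − 2·p + 1) • D A`. -/
theorem Dop_sq_Δop_comm (n g p : ℕ) (A : MvPolynomial (Fin (n + 1)) ℚ)
    (hg : A.IsHomogeneous g) (hp : A.IsWeightedHomogeneous (wt n) p) :
    Dop n (Dop n (Δop n A)) - Δop n (Dop n (Dop n A)) =
      (2 * (((n * g : ℕ) : ℚ) - 2 * (p : ℚ) + 1)) • Dop n A := by
  have hg' : A.IsWeightedHomogeneous (fun _ : Fin (n+1) => (1 : ℤ)) (g : ℤ) := by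
    have := wh_cast 1 g A hg
    simpa using this
  have hp' : A.IsWeightedHomogeneous (fun i : Fin (n+1) => ((i : ℕ) : ℤ)) (p : ℤ) := by
    have := wh_cast (wt n) p A hp
    simpa [wt] using this
  have hgD : (Dop n A).IsWeightedHomogeneous (fun _ : Fin (n+1) => (1 : ℤ)) (g : ℤ) :=
    Dop_wh n _ _ _ A (fun i => by ring) hg'
  have hpD : (Dop n A).IsWeightedHomogeneous (fun i : Fin (n+1) => ((i : ℕ) : ℤ))
      ((p : ℤ) - 1) :=
    Dop_wh n _ _ _ A (fun i => by
      simp only [Fin.coe_castSucc, Fin.val_succ]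
      push_cast
      ring) hp'
  have h1 := comm_key n A (g : ℤ) (p : ℤ) hg' hp'
  have h2 := comm_key n (Dop n A) (g : ℤ) ((p : ℤ) - 1) hgD hpD
  have e : Dop n (Δop n A) = Δop n (Dop n A) + ((n * g - 2 * p : ℤ) : ℚ) • A := by
    rw [← h1]; ring
  rw [e, Dop_add, Dop_smul]
  have e2 : Dop n (Δop n (Dop n A)) = Δop n (Dop n (Dop n A))
      + ((n * (g:ℤ) - 2 * ((p:ℤ) - 1) : ℤ) : ℚ) • Dop n A := by
    rw [← h2]; ring
  rw [e2]
  push_cast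
  module
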